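/- Let v, w ∈ ℝ² be linearly independent with det(v, w) = 1, and let Γ ⊆ ℝ² be a nonempty compact set with v, w ∈ Γ and Γ ⊆ conv{0, v, w, v + w}. For λ ∈ [0,1] set z_λ := (1−λ)·w − λ·v and s(λ) := sup_{x ∈ Γ} |det(x, z_λ)|. Then the set K₂ := {α · z_λ : λ ∈ [0,1], 0 ≤ α ≤ 1/s(λ)} is convex. -/

import Mathlib

/-- The standard determinant form on ℝ². -/
def det2 (x y : ℝ × ℝ) : ℝ := x.1 * y.2 - x.2 * y.1

lemma det2_smul_right (c : ℝ) (x y : ℝ × ℝ) : det2 x (c • y) = c * det2 x y := by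
  simp [det2]; ring

lemma det2_smul_left (c : ℝ) (x y : ℝ × ℝ) : det2 (c • x) y = c * det2 x y := by
  simp [det2]; ring

lemma det2_add_left (x y u : ℝ × ℝ) : det2 (x + y) u = det2 x u + det2 y u := by
  simp [det2]; ring

lemma det2_add_right (x y u : ℝ × ℝ) : det2 u (x + y) = det2 u x + det2 u y := by
  simp [det2]; ring

lemma det2_sub_right (x y u : ℝ × ℝ) : det2 u (x - y) = det2 u x - det2 u y := by
  simp [det2]; ring

/-- The region `K₂` enclosed by the constructed arc `γ₂` together with the
segments from the origin to its endpoints is convex. -/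
theorem stmt_6 (v w : ℝ × ℝ) (hind : LinearIndependent ℝ ![v, w])
    (hdet : det2 v w = 1)
    (Γ : Set (ℝ × ℝ)) (hΓne : Γ.Nonempty) (hΓc : IsCompact Γ)
    (hvΓ : v ∈ Γ) (hwΓ : w ∈ Γ)
    (hΓsub : Γ ⊆ convexHull ℝ {0, v, w, v + w})
    (z : ℝ → ℝ × ℝ) (hz : ∀ l : ℝ, z l = (1 - l) • w - l • v)
    (s : ℝ → ℝ) (hs : ∀ l : ℝ, s l = sSup ((fun x => |det2 x (z l)|) '' Γ))
    (K₂ : Set (ℝ × ℝ))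
    (hK₂ : K₂ = {p | ∃ l ∈ Set.Icc (0 : ℝ) 1, ∃ α : ℝ,
      0 ≤ α ∧ α ≤ (s l)⁻¹ ∧ p = α • z l}) :
    Convex ℝ K₂ := by
  have hdet' : v.1 * w.2 - v.2 * w.1 = 1 := hdet
  -- bounds for points in the parallelogram
  have hbounds : ∀ x ∈ Γ, 0 ≤ det2 x w ∧ det2 x w ≤ 1 ∧ 0 ≤ det2 v x ∧ det2 v x ≤ 1 := by
    intro x hx
    have hS : Convex ℝ {q : ℝ × ℝ |
        0 ≤ det2 q w ∧ det2 q w ≤ 1 ∧ 0 ≤ det2 v q ∧ det2 v q ≤ 1} := by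
      intro p hp q hq a b ha hb hab
      obtain ⟨h1, h2, h3, h4⟩ := hp
      obtain ⟨h5, h6, h7, h8⟩ := hq
      simp only [det2, Set.mem_setOf_eq, Prod.fst_add, Prod.snd_add, Prod.smul_fst,
        Prod.smul_snd, smul_eq_mul] at *
      refine ⟨by nlinarith, by nlinarith, by nlinarith, by nlinarith⟩
    have hsub : ({0, v, w, v + w} : Set (ℝ × ℝ)) ⊆ {q : ℝ × ℝ |
        0 ≤ det2 q w ∧ det2 q w ≤ 1 ∧ 0 ≤ det2 v q ∧ det2 v q ≤ 1} := by
      intro y hy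
      simp only [Set.mem_insert_iff, Set.mem_singleton_iff] at hy
      rcases hy with rfl | rfl | rfl | rfl <;>
        simp only [det2, Set.mem_setOf_eq, Prod.fst_add, Prod.snd_add, Prod.fst_zero,
          Prod.snd_zero] <;>
        refine ⟨by nlinarith, by nlinarith, by nlinarith, by nlinarith⟩
    exact convexHull_min hsub hS (hΓsub hx)
  -- det2 x (z l) is in [0,1] for x ∈ Γ, l ∈ [0,1]
  have hnn : ∀ x ∈ Γ, ∀ l : ℝ, 0 ≤ l → l ≤ 1 →
      0 ≤ det2 x (z l) ∧ det2 x (z l) ≤ 1 := by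
    intro x hx l h0 h1
    obtain ⟨a0, a1, b0, b1⟩ := hbounds x hx
    have hxz : det2 x (z l) = (1 - l) * det2 x w + l * det2 v x := by
      rw [hz]; simp [det2]; ring
    constructor
    · rw [hxz]
      have := mul_nonneg (by linarith : (0:ℝ) ≤ 1 - l) a0
      have := mul_nonneg h0 b0
      linarith
    · rw [hxz]
      have := mul_le_mul_of_nonneg_left a1 (by linarith : (0:ℝ) ≤ 1 - l)
      have := mul_le_mul_of_nonneg_left b1 h0
      linarith
  have hbdd : ∀ l : ℝ, 0 ≤ l → l ≤ 1 → BddAbove ((fun x => |det2 x (z l)|) '' Γ) := by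
    intro l h0 h1
    refine ⟨1, ?_⟩
    rintro y ⟨x, hx, rfl⟩
    obtain ⟨hn, hu⟩ := hnn x hx l h0 h1
    show |det2 x (z l)| ≤ 1
    rw [abs_of_nonneg hn]; exact hu
  have hsle : ∀ x ∈ Γ, ∀ l : ℝ, 0 ≤ l → l ≤ 1 → |det2 x (z l)| ≤ s l := by
    intro x hx l h0 h1
    rw [hs]
    exact le_csSup (hbdd l h0 h1) ⟨x, hx, rfl⟩
  have hvz : ∀ l : ℝ, det2 v (z l) = 1 - l := by
    intro l
    have : det2 v (z l) = (1 - l) * (v.1 * w.2 - v.2 * w.1) := by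
      rw [hz]; simp [det2]; ring
    rw [this, hdet']; ring
  have hwz : ∀ l : ℝ, det2 w (z l) = l := by
    intro l
    have : det2 w (z l) = l * (v.1 * w.2 - v.2 * w.1) := by
      rw [hz]; simp [det2]; ring
    rw [this, hdet']; ring
  have hspos : ∀ l : ℝ, 0 ≤ l → l ≤ 1 → 0 < s l := by
    intro l h0 h1
    have h2 := hsle v hvΓ l h0 h1
    have h3 := hsle w hwΓ l h0 h1
    rw [hvz] at h2
    rw [hwz] at h3
    rw [abs_of_nonneg (by linarith : (0:ℝ) ≤ 1 - l)] at h2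
    rw [abs_of_nonneg h0] at h3
    linarith
  -- the half-plane characterization
  have hKA : K₂ = {p : ℝ × ℝ | det2 p w ≤ 0 ∧ 0 ≤ det2 v p ∧ ∀ x ∈ Γ, det2 x p ≤ 1} := by
    rw [hK₂]
    ext p
    simp only [Set.mem_setOf_eq, Set.mem_Icc]
    constructor
    · rintro ⟨l, ⟨h0, h1⟩, α, hα0, hα1, rfl⟩
      have hslpos := hspos l h0 h1
      refine ⟨?_, ?_, ?_⟩
      · have : det2 (α • z l) w = α * (-(l * (v.1 * w.2 - v.2 * w.1))) := by
          rw [hz]; simp [det2]; ring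
        rw [this, hdet']
        have := mul_nonneg hα0 h0
        nlinarith
      · have : det2 v (α • z l) = α * (1 - l) := by
          rw [det2_smul_right, hvz]
        rw [this]
        exact mul_nonneg hα0 (by linarith)
      · intro x hx
        rw [det2_smul_right]
        have h2 := hsle x hx l h0 h1
        rw [abs_of_nonneg (hnn x hx l h0 h1).1] at h2
        calc α * det2 x (z l) ≤ α * s l :=
              mul_le_mul_of_nonneg_left h2 hα0
          _ ≤ (s l)⁻¹ * s l := mul_le_mul_of_nonneg_right hα1 hslpos.le
          _ = 1 := inv_mul_cancel₀ hslpos.ne'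
    · rintro ⟨hc1, hc2, hΓ1⟩
      set c1 := det2 p w with hc1def
      set c2 := det2 v p with hc2def
      have hp : p = c1 • v + c2 • w := by
        have hc1' : c1 = p.1 * w.2 - p.2 * w.1 := rfl
        have hc2' : c2 = v.1 * p.2 - v.2 * p.1 := rfl
        apply Prod.ext
        · show p.1 = (c1 • v + c2 • w).1
          simp only [Prod.fst_add, Prod.smul_fst, smul_eq_mul, hc1', hc2']
          linear_combination (-p.1) * hdet'
        · show p.2 = (c1 • v + c2 • w).2
          simp only [Prod.snd_add, Prod.smul_snd, smul_eq_mul, hc1', hc2']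
          linear_combination (-p.2) * hdet'
      rcases eq_or_lt_of_le (by linarith : (0:ℝ) ≤ c2 - c1) with hβ | hβ
      · -- p = 0
        have h1 : c1 = 0 := by linarith
        have h2 : c2 = 0 := by linarith
        refine ⟨0, ⟨le_refl 0, zero_le_one⟩, 0, le_refl 0,
          inv_nonneg.mpr (hspos 0 le_rfl zero_le_one).le, ?_⟩
        rw [hp, h1, h2]; simp
      · set β := c2 - c1 with hβdef
        set l := -c1 / β with hldef
        have hl0 : 0 ≤ l := div_nonneg (by linarith) hβ.le
        have hl1 : l ≤ 1 := by
          rw [hldef, div_le_one hβ]; linarith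
        have hpz : p = β • z l := by
          rw [hp, hz, hldef]
          apply Prod.ext <;>
            simp only [Prod.fst_add, Prod.snd_add, Prod.fst_sub, Prod.snd_sub,
              Prod.smul_fst, Prod.smul_snd, smul_eq_mul] <;>
            field_simp <;> ring
        have hslpos := hspos l hl0 hl1
        have hsleβ : s l ≤ β⁻¹ := by
          rw [hs]
          apply Real.sSup_le
          · rintro y ⟨x, hx, rfl⟩
            show |det2 x (z l)| ≤ β⁻¹
            rw [abs_of_nonneg (hnn x hx l hl0 hl1).1]
            have hxp : det2 x p ≤ 1 := hΓ1 x hx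
            rw [hpz, det2_smul_right] at hxp
            rw [← mul_le_mul_iff_right₀ hβ, mul_inv_cancel₀ hβ.ne']
            exact hxp
          · exact inv_nonneg.mpr hβ.le
        have hβle : β ≤ (s l)⁻¹ := by
          have := inv_anti₀ hslpos hsleβ
          rwa [inv_inv] at this
        exact ⟨l, ⟨hl0, hl1⟩, β, hβ.le, hβle, hpz⟩
  rw [hKA]
  intro p hp q hq a b ha hb hab
  obtain ⟨h1, h2, h3⟩ := hp
  obtain ⟨h4, h5, h6⟩ := hq
  refine ⟨?_, ?_, ?_⟩
  · have : det2 (a • p + b • q) w = a * det2 p w + b * det2 q w := by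
      rw [det2_add_left, det2_smul_left, det2_smul_left]
    rw [this]
    nlinarith
  · have : det2 v (a • p + b • q) = a * det2 v p + b * det2 v q := by
      rw [det2_add_right, det2_smul_right, det2_smul_right]
    rw [this]
    have := mul_nonneg ha h2
    have := mul_nonneg hb h5
    linarith
  · intro x hx
    have : det2 x (a • p + b • q) = a * det2 x p + b * det2 x q := by
      rw [det2_add_right, det2_smul_right, det2_smul_right]
    rw [this]
    have := mul_le_mul_of_nonneg_left (h3 x hx) ha
    have := mul_le_mul_of_nonneg_left (h6 x hx) hb
    linarith
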